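/- Let p ≤ n and let {A,B} be an (m,p,n)-GMP with GSVD as in the context, with generalized singular values (αᵢ, βᵢ); in particular β₁ = ⋯ = β_{n−p} = 0. Then for every n−p+1 ≤ i ≤ n, βᵢ² equals the difference of maxima: βᵢ² = max_{Ψ ∈ 𝕌_p} Re tr(Bᴴ Ψᴴ 𝒫_i Ψ B (AᴴA + BᴴB)^{-1}) − max_{Ψ ∈ 𝕌_p} Re tr(Bᴴ Ψᴴ 𝒫_{i+1} Ψ B (AᴴA + BᴴB)^{-1}). -/
import Mathlib
open Matrix BigOperators

lemma key_ineq {p : ℕ} (d : Fin p → ℝ) (hd : Monotone d) (w : Fin p → ℝ)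
    (hw0 : ∀ k, 0 ≤ w k) (hw1 : ∀ k, w k ≤ 1) (t : ℕ) (ht : t < p)
    (hsum : ∑ k : Fin p, w k = ∑ k : Fin p, if t ≤ (k : ℕ) then (1 : ℝ) else 0) :
    ∑ k : Fin p, d k * w k ≤ ∑ k : Fin p, if t ≤ (k : ℕ) then d k else 0 := by
  set t' : Fin p := ⟨t, ht⟩ with ht'
  have h : ∀ k : Fin p, d k * w k - (if t ≤ (k : ℕ) then d k else 0)
      ≤ d t' * (w k - if t ≤ (k : ℕ) then (1 : ℝ) else 0) := by
    intro k
    by_cases hk : t ≤ (k : ℕ)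
    · simp only [hk, if_pos]
      have hdk : d t' ≤ d k := hd (by simp [Fin.le_def, ht', hk])
      nlinarith [hw1 k]
    · simp only [hk, if_neg, not_false_iff]
      have hdk : d k ≤ d t' := hd (by simp [Fin.le_def, ht']; omega)
      nlinarith [hw0 k]
  have := Finset.sum_le_sum (s := Finset.univ) (fun k _ => h k)
  rw [Finset.sum_sub_distrib, ← Finset.mul_sum] at this
  have h2 : ∑ k : Fin p, (w k - if t ≤ (k : ℕ) then (1 : ℝ) else 0) = 0 := by
    rw [Finset.sum_sub_distrib, hsum, sub_self]
  rw [h2, mul_zero] at this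
  linarith

lemma trace_re {p : ℕ} (U : Matrix (Fin p) (Fin p) ℂ) (c e : Fin p → ℝ) :
    (Matrix.trace (Matrix.diagonal (fun j => (c j : ℂ)) * U *
      Matrix.diagonal (fun k => (e k : ℂ)) * Uᴴ)).re
    = ∑ j : Fin p, ∑ k : Fin p, c j * e k * Complex.normSq (U j k) := by
  have h : Matrix.trace (Matrix.diagonal (fun j => (c j : ℂ)) * U *
      Matrix.diagonal (fun k => (e k : ℂ)) * Uᴴ)
      = ((∑ j : Fin p, ∑ k : Fin p, c j * e k * Complex.normSq (U j k) : ℝ) : ℂ) := by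
    rw [Matrix.trace]
    push_cast
    apply Finset.sum_congr rfl
    intro j _
    simp only [Matrix.diag_apply, Matrix.mul_apply, Matrix.diagonal_apply,
      Matrix.conjTranspose_apply, Complex.star_def, ite_mul, mul_ite, zero_mul, mul_zero,
      Finset.sum_ite_eq, Finset.sum_ite_eq', Finset.mem_univ, if_true]
    apply Finset.sum_congr rfl
    intro k _
    rw [show ((Complex.normSq (U j k) : ℝ) : ℂ) = U j k * (starRingEnd ℂ) (U j k) from
      (Complex.mul_conj _).symm]
    ring
  rw [h, Complex.ofReal_re]

-- unitary row/column norm facts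
lemma unitary_col {p : ℕ} {U : Matrix (Fin p) (Fin p) ℂ}
    (hU : U ∈ Matrix.unitaryGroup (Fin p) ℂ) (k : Fin p) :
    ∑ j : Fin p, Complex.normSq (U j k) = 1 := by
  have h1 : (star U * U) k k = 1 := by
    rw [(Matrix.mem_unitaryGroup_iff'.mp hU : star U * U = 1)]
    simp
  have : ((∑ j : Fin p, Complex.normSq (U j k) : ℝ) : ℂ) = 1 := by
    rw [← h1, Matrix.mul_apply]
    simp only [Matrix.star_apply, Complex.star_def, ← Complex.normSq_eq_conj_mul_self]
    norm_cast
  exact_mod_cast this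

lemma unitary_row {p : ℕ} {U : Matrix (Fin p) (Fin p) ℂ}
    (hU : U ∈ Matrix.unitaryGroup (Fin p) ℂ) (j : Fin p) :
    ∑ k : Fin p, Complex.normSq (U j k) = 1 := by
  have h1 : (U * star U) j j = 1 := by
    rw [(Matrix.mem_unitaryGroup_iff.mp hU : U * star U = 1)]
    simp
  have : ((∑ k : Fin p, Complex.normSq (U j k) : ℝ) : ℂ) = 1 := by
    rw [← h1, Matrix.mul_apply]
    simp only [Matrix.star_apply, Complex.star_def, Complex.mul_conj]
    norm_cast
  exact_mod_cast this

lemma sup_eq_sum {n p : ℕ} (B : Matrix (Fin p) (Fin n) ℂ) (Minv : Matrix (Fin n) (Fin n) ℂ)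
    (V : Matrix (Fin p) (Fin p) ℂ) (hV : V ∈ Matrix.unitaryGroup (Fin p) ℂ)
    (d : Fin p → ℝ) (hd : Monotone d)
    (hBMB : B * Minv * Bᴴ = V * Matrix.diagonal (fun k => (d k : ℂ)) * Vᴴ)
    (t : ℕ) :
    (⨆ Φ : Matrix.unitaryGroup (Fin p) ℂ,
      (Matrix.trace (Bᴴ * (Φ : Matrix (Fin p) (Fin p) ℂ)ᴴ *
        Matrix.diagonal (fun k : Fin p => if t ≤ (k : ℕ) then (1 : ℂ) else 0) *
        (Φ : Matrix (Fin p) (Fin p) ℂ) * B * Minv)).re)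
    = ∑ k : Fin p, if t ≤ (k : ℕ) then d k else 0 := by
  set cr : Fin p → ℝ := fun k => if t ≤ (k : ℕ) then (1 : ℝ) else 0 with hcr
  have hcc : (fun k : Fin p => if t ≤ (k : ℕ) then (1 : ℂ) else 0)
      = fun k => ((cr k : ℝ) : ℂ) := by
    funext k; simp only [hcr]; split_ifs <;> simp
  set Dc : Matrix (Fin p) (Fin p) ℂ := Matrix.diagonal (fun k => (d k : ℂ)) with hDc
  -- value of the functional at a unitary Φ
  have hval : ∀ Φ : Matrix (Fin p) (Fin p) ℂ,
      (Matrix.trace (Bᴴ * Φᴴ *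
        Matrix.diagonal (fun k : Fin p => if t ≤ (k : ℕ) then (1 : ℂ) else 0) *
        Φ * B * Minv)).re
      = ∑ k : Fin p, d k * ∑ j : Fin p, cr j * Complex.normSq ((Φ * V) j k) := by
    intro Φ
    have e1 : Bᴴ * Φᴴ * Matrix.diagonal (fun j => ((cr j : ℝ) : ℂ)) * Φ * B * Minv
        = Bᴴ * (Φᴴ * Matrix.diagonal (fun j => ((cr j : ℝ) : ℂ)) * Φ * B * Minv) := by
      simp only [Matrix.mul_assoc]
    have e2 : Φᴴ * Matrix.diagonal (fun j => ((cr j : ℝ) : ℂ)) * Φ * B * Minv * Bᴴ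
        = Φᴴ * (Matrix.diagonal (fun j => ((cr j : ℝ) : ℂ)) * Φ * B * Minv * Bᴴ) := by
      simp only [Matrix.mul_assoc]
    have e3 : Matrix.diagonal (fun j => ((cr j : ℝ) : ℂ)) * Φ * B * Minv * Bᴴ * Φᴴ
        = Matrix.diagonal (fun j => ((cr j : ℝ) : ℂ)) * (Φ * V) * Dc * (Φ * V)ᴴ := by
      rw [Matrix.conjTranspose_mul]
      have : Matrix.diagonal (fun j => ((cr j : ℝ) : ℂ)) * Φ * B * Minv * Bᴴ * Φᴴ
          = Matrix.diagonal (fun j => ((cr j : ℝ) : ℂ)) * Φ * (B * Minv * Bᴴ) * Φᴴ := by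
        simp only [Matrix.mul_assoc]
      rw [this, hBMB]
      simp only [Matrix.mul_assoc]
    rw [hcc, e1, Matrix.trace_mul_comm, e2, Matrix.trace_mul_comm, e3, trace_re]
    rw [Finset.sum_comm]
    apply Finset.sum_congr rfl
    intro k _
    rw [Finset.mul_sum]
    apply Finset.sum_congr rfl
    intro j _
    ring
  by_cases ht : t < p
  · -- upper bound for each Φ
    have hupper : ∀ Φ : Matrix.unitaryGroup (Fin p) ℂ,
        (Matrix.trace (Bᴴ * (Φ : Matrix (Fin p) (Fin p) ℂ)ᴴ *
          Matrix.diagonal (fun k : Fin p => if t ≤ (k : ℕ) then (1 : ℂ) else 0) *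
          (Φ : Matrix (Fin p) (Fin p) ℂ) * B * Minv)).re
        ≤ ∑ k : Fin p, if t ≤ (k : ℕ) then d k else 0 := by
      rintro ⟨Φ, hΦ⟩
      rw [hval Φ]
      set U := Φ * V with hU
      have hUu : U ∈ Matrix.unitaryGroup (Fin p) ℂ := mul_mem hΦ hV
      set w : Fin p → ℝ := fun k => ∑ j : Fin p, cr j * Complex.normSq (U j k) with hw
      apply key_ineq d hd w _ _ t ht
      · -- sum of w
        rw [Finset.sum_comm (f := fun k j => cr j * Complex.normSq (U j k))]
        calc ∑ j : Fin p, ∑ k : Fin p, cr j * Complex.normSq (U j k)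
            = ∑ j : Fin p, cr j := by
              apply Finset.sum_congr rfl
              intro j _
              rw [← Finset.mul_sum, unitary_row hUu j, mul_one]
          _ = ∑ k : Fin p, if t ≤ (k : ℕ) then (1 : ℝ) else 0 := rfl
      · intro k
        apply Finset.sum_nonneg
        intro j _
        apply mul_nonneg _ (Complex.normSq_nonneg _)
        simp only [hcr]; split_ifs <;> norm_num
      · intro k
        calc ∑ j : Fin p, cr j * Complex.normSq (U j k)
            ≤ ∑ j : Fin p, Complex.normSq (U j k) := by
              apply Finset.sum_le_sum
              intro j _
              by_cases hj : t ≤ (j : ℕ)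
              · simp [hcr, hj]
              · simp [hcr, hj, Complex.normSq_nonneg]
          _ = 1 := unitary_col hUu k
    have hlow : (Matrix.trace (Bᴴ * (star V)ᴴ *
          Matrix.diagonal (fun k : Fin p => if t ≤ (k : ℕ) then (1 : ℂ) else 0) *
          (star V) * B * Minv)).re
        = ∑ k : Fin p, if t ≤ (k : ℕ) then d k else 0 := by
      rw [hval (star V)]
      have hVu : star V * V = 1 := Matrix.mem_unitaryGroup_iff'.mp hV
      rw [hVu]
      apply Finset.sum_congr rfl
      intro k _
      have h1 : ∀ j : Fin p, Complex.normSq ((1 : Matrix (Fin p) (Fin p) ℂ) j k)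
          = if j = k then 1 else 0 := by
        intro j
        by_cases hj : j = k <;> simp [Matrix.one_apply, hj]
      simp only [h1, mul_ite, mul_one, mul_zero, Finset.sum_ite_eq', Finset.mem_univ, if_true]
      simp only [hcr]
      split_ifs <;> ring
    apply le_antisymm
    · exact ciSup_le hupper
    · have hbdd : BddAbove (Set.range fun Φ : Matrix.unitaryGroup (Fin p) ℂ =>
          (Matrix.trace (Bᴴ * (Φ : Matrix (Fin p) (Fin p) ℂ)ᴴ *
            Matrix.diagonal (fun k : Fin p => if t ≤ (k : ℕ) then (1 : ℂ) else 0) *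
            (Φ : Matrix (Fin p) (Fin p) ℂ) * B * Minv)).re) := by
        refine ⟨∑ k : Fin p, if t ≤ (k : ℕ) then d k else 0, ?_⟩
        rintro x ⟨Φ, rfl⟩
        exact hupper Φ
      exact le_ciSup_of_le hbdd ⟨star V, Unitary.star_mem hV⟩ (le_of_eq hlow.symm)
  · -- t ≥ p : both sides are 0
    push_neg at ht
    have hzero : (fun k : Fin p => if t ≤ (k : ℕ) then (1 : ℂ) else 0) = fun _ => 0 := by
      funext k
      rw [if_neg]
      omega
    have : ∀ Φ : Matrix.unitaryGroup (Fin p) ℂ,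
        (Matrix.trace (Bᴴ * (Φ : Matrix (Fin p) (Fin p) ℂ)ᴴ *
          Matrix.diagonal (fun k : Fin p => if t ≤ (k : ℕ) then (1 : ℂ) else 0) *
          (Φ : Matrix (Fin p) (Fin p) ℂ) * B * Minv)).re = 0 := by
      intro Φ
      rw [hzero]
      simp [Matrix.diagonal_zero]
    rw [funext this]
    rw [ciSup_const]
    symm
    apply Finset.sum_eq_zero
    intro k _
    rw [if_neg]
    omega
section GMP
variable {m p n : ℕ}

lemma sigma_mul_sigmaH (hpn : p ≤ n) (β : Fin n → ℝ) :
    (Matrix.of fun (k : Fin p) (l : Fin n) =>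
        if (l : ℕ) + p = n + (k : ℕ) then Complex.ofReal (β l) else 0) *
      (Matrix.of fun (k : Fin p) (l : Fin n) =>
        if (l : ℕ) + p = n + (k : ℕ) then Complex.ofReal (β l) else 0)ᴴ
    = Matrix.diagonal (fun k : Fin p =>
        ((β ⟨n + (k : ℕ) - p, by have := k.isLt; omega⟩ ^ 2 : ℝ) : ℂ)) := by
  ext k k'
  simp only [Matrix.mul_apply, Matrix.conjTranspose_apply, Matrix.of_apply, Complex.star_def,
    apply_ite (starRingEnd ℂ), map_zero, Complex.conj_ofReal, Matrix.diagonal_apply, ite_mul,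
    mul_ite, zero_mul, mul_zero]
  by_cases hkk : k = k'
  · subst hkk
    rw [if_pos rfl]
    rw [Finset.sum_eq_single (⟨n + (k : ℕ) - p, by have := k.isLt; omega⟩ : Fin n)]
    · rw [if_pos (by simp; have := k.isLt; omega), if_pos (by simp; have := k.isLt; omega)]
      push_cast; ring
    · intro l _ hl
      rw [if_neg]
      intro hc
      apply hl
      apply Fin.ext
      simp
      omega
    · intro h; exact absurd (Finset.mem_univ _) h
  · rw [if_neg hkk]
    apply Finset.sum_eq_zero
    intro l _
    split_ifs with h1 h2
    · exact absurd (Fin.ext (by omega : (k : ℕ) = (k' : ℕ))) hkk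
    all_goals simp

lemma sigmaH_mul_sigma (hpn : p ≤ n) (β : Fin n → ℝ)
    (hzero : ∀ k : Fin n, (k : ℕ) + p < n → β k = 0) :
    (Matrix.of fun (k : Fin p) (l : Fin n) =>
        if (l : ℕ) + p = n + (k : ℕ) then Complex.ofReal (β l) else 0)ᴴ *
      (Matrix.of fun (k : Fin p) (l : Fin n) =>
        if (l : ℕ) + p = n + (k : ℕ) then Complex.ofReal (β l) else 0)
    = Matrix.diagonal (fun l : Fin n => ((β l ^ 2 : ℝ) : ℂ)) := by
  ext l l'
  simp only [Matrix.mul_apply, Matrix.conjTranspose_apply, Matrix.of_apply, Complex.star_def,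
    apply_ite (starRingEnd ℂ), map_zero, Complex.conj_ofReal, Matrix.diagonal_apply, ite_mul,
    mul_ite, zero_mul, mul_zero]
  by_cases hll : l = l'
  · subst hll
    rw [if_pos rfl]
    by_cases hn : n ≤ (l : ℕ) + p
    · rw [Finset.sum_eq_single (⟨(l : ℕ) + p - n, by have := l.isLt; omega⟩ : Fin p)]
      · rw [if_pos (by simp; omega), if_pos (by simp; omega)]
        push_cast; ring
      · intro k _ hk
        rw [if_neg (by intro hc; exact hk (Fin.ext (by simp; omega)))]
      · intro h; exact absurd (Finset.mem_univ _) h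
    · push_neg at hn
      have hb : β l = 0 := hzero l hn
      rw [hb]
      rw [show (((0 : ℝ) ^ 2 : ℝ) : ℂ) = (0 : ℂ) by norm_num]
      apply Finset.sum_eq_zero
      intro k _
      split_ifs <;> simp
  · rw [if_neg hll]
    apply Finset.sum_eq_zero
    intro k _
    split_ifs with h1 h2
    · exact absurd (Fin.ext (by omega : (l : ℕ) = (l' : ℕ))) hll
    all_goals simp

end GMP

open scoped ComplexOrder

set_option maxHeartbeats 1000000 in
theorem stmt3
    {m p n : ℕ} (hpn : p ≤ n)
    (A : Matrix (Fin m) (Fin n) ℂ) (B : Matrix (Fin p) (Fin n) ℂ)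
    (hrank : (Matrix.fromRows A B).rank = n)
    (V : Matrix (Fin p) (Fin p) ℂ) (hV : V ∈ Matrix.unitaryGroup (Fin p) ℂ)
    (R : Matrix (Fin n) (Fin n) ℂ) (hR : IsUnit R.det)
    (β : Fin n → ℝ)
    (hβ0 : ∀ k, 0 ≤ β k) (hβ1 : ∀ k, β k ≤ 1) (hmono : Monotone β)
    (hzero : ∀ k : Fin n, (k : ℕ) + p < n → β k = 0)
    (hB : B = V * (Matrix.of fun (k : Fin p) (l : Fin n) =>
        if (l : ℕ) + p = n + (k : ℕ) then Complex.ofReal (β l) else 0) * R)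
    (hAA : Aᴴ * A = Rᴴ * Matrix.diagonal (fun l => Complex.ofReal (1 - β l ^ 2)) * R)
    (i : Fin n) (hip : n ≤ p + (i : ℕ)) :
    β i ^ 2 =
(⨆ Φ : Matrix.unitaryGroup (Fin p) ℂ,
      (Matrix.trace (Bᴴ * (Φ : Matrix (Fin p) (Fin p) ℂ)ᴴ *
        Matrix.diagonal (fun k : Fin p => if p + (i : ℕ) ≤ (k : ℕ) + n then (1 : ℂ) else 0) *
        (Φ : Matrix (Fin p) (Fin p) ℂ) * B * (Aᴴ * A + Bᴴ * B)⁻¹)).re) -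
(⨆ Φ : Matrix.unitaryGroup (Fin p) ℂ,
      (Matrix.trace (Bᴴ * (Φ : Matrix (Fin p) (Fin p) ℂ)ᴴ *
        Matrix.diagonal (fun k : Fin p => if p + (i : ℕ) + 1 ≤ (k : ℕ) + n then (1 : ℂ) else 0) *
        (Φ : Matrix (Fin p) (Fin p) ℂ) * B * (Aᴴ * A + Bᴴ * B)⁻¹)).re) := by
  have hi : (i : ℕ) < n := i.isLt
  have hp : 0 < p := by omega
  have hVV : Vᴴ * V = 1 := Matrix.mem_unitaryGroup_iff'.mp hV
  set Sg : Matrix (Fin p) (Fin n) ℂ := Matrix.of fun (k : Fin p) (l : Fin n) =>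
      if (l : ℕ) + p = n + (k : ℕ) then Complex.ofReal (β l) else 0 with hSg
  have hBB : Bᴴ * B = Rᴴ * Matrix.diagonal (fun l : Fin n => ((β l ^ 2 : ℝ) : ℂ)) * R := by
    rw [hB]
    simp only [Matrix.conjTranspose_mul]
    have h1 : Rᴴ * (Sgᴴ * Vᴴ) * (V * Sg * R)
        = Rᴴ * (Sgᴴ * ((Vᴴ * V) * (Sg * R))) := by
      simp only [Matrix.mul_assoc]
    rw [h1, hVV, Matrix.one_mul, ← Matrix.mul_assoc Sgᴴ Sg R, hSg,
      sigmaH_mul_sigma hpn β hzero]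
    exact (Matrix.mul_assoc _ _ _).symm
  have hMRR : Aᴴ * A + Bᴴ * B = Rᴴ * R := by
    rw [hAA, hBB, ← Matrix.add_mul, ← Matrix.mul_add, Matrix.diagonal_add]
    have h2 : (fun l : Fin n => Complex.ofReal (1 - β l ^ 2) + ((β l ^ 2 : ℝ) : ℂ))
        = fun _ => (1 : ℂ) := by
      funext l; push_cast; ring
    rw [h2, Matrix.diagonal_one, Matrix.mul_one]
  have hRH : IsUnit Rᴴ.det := by
    rw [Matrix.det_conjTranspose]; exact hR.star
  set N : Matrix (Fin n) (Fin n) ℂ := (Aᴴ * A + Bᴴ * B)⁻¹ with hN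
  have hRMR : R * N * Rᴴ = 1 := by
    rw [hN, hMRR, Matrix.mul_inv_rev]
    have h1 : R * (R⁻¹ * Rᴴ⁻¹) * Rᴴ = (R * R⁻¹) * (Rᴴ⁻¹ * Rᴴ) := by
      simp only [Matrix.mul_assoc]
    rw [h1, Matrix.mul_nonsing_inv _ hR, Matrix.nonsing_inv_mul _ hRH, one_mul]
  have hBMB : B * N * Bᴴ
      = V * Matrix.diagonal (fun k : Fin p =>
          (((β ⟨n + (k : ℕ) - p, by have := k.isLt; omega⟩ ^ 2 : ℝ)) : ℂ)) * Vᴴ := by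
    conv_lhs => rw [hB]
    simp only [Matrix.conjTranspose_mul]
    have h1 : V * Sg * R * N * (Rᴴ * (Sgᴴ * Vᴴ))
        = V * (Sg * ((R * N * Rᴴ) * (Sgᴴ * Vᴴ))) := by
      simp only [Matrix.mul_assoc]
    rw [h1, hRMR, Matrix.one_mul, ← Matrix.mul_assoc Sg Sgᴴ Vᴴ, hSg,
      sigma_mul_sigmaH hpn β]
    exact (Matrix.mul_assoc _ _ _).symm
  have hdmono : Monotone (fun k : Fin p =>
      β ⟨n + (k : ℕ) - p, by have := k.isLt; omega⟩ ^ 2) := by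
    intro a b hab
    dsimp only
    have h1 : (⟨n + (a : ℕ) - p, by have := a.isLt; omega⟩ : Fin n)
        ≤ ⟨n + (b : ℕ) - p, by have := b.isLt; omega⟩ := by
      rw [Fin.le_def]
      have := Fin.le_def.mp hab
      simp
      omega
    exact pow_le_pow_left₀ (hβ0 _) (hmono h1) 2
  have hc1 : (fun k : Fin p => if p + (i : ℕ) ≤ (k : ℕ) + n then (1 : ℂ) else 0)
      = fun k : Fin p => if p + (i : ℕ) - n ≤ (k : ℕ) then (1 : ℂ) else 0 := by
    funext k
    apply if_congr _ rfl rfl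
    omega
  have hc2 : (fun k : Fin p => if p + (i : ℕ) + 1 ≤ (k : ℕ) + n then (1 : ℂ) else 0)
      = fun k : Fin p => if p + (i : ℕ) - n + 1 ≤ (k : ℕ) then (1 : ℂ) else 0 := by
    funext k
    apply if_congr _ rfl rfl
    omega
  rw [hc1, hc2,
    sup_eq_sum B N V hV _ hdmono hBMB (p + (i : ℕ) - n),
    sup_eq_sum B N V hV _ hdmono hBMB (p + (i : ℕ) - n + 1),
    ← Finset.sum_sub_distrib]
  have hstep : ∀ k : Fin p,
      ((if p + (i : ℕ) - n ≤ (k : ℕ) then β ⟨n + (k : ℕ) - p, by have := k.isLt; omega⟩ ^ 2 else 0)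
        - (if p + (i : ℕ) - n + 1 ≤ (k : ℕ) then β ⟨n + (k : ℕ) - p, by have := k.isLt; omega⟩ ^ 2 else 0))
      = if k = (⟨p + (i : ℕ) - n, by omega⟩ : Fin p) then β i ^ 2 else 0 := by
    intro k
    by_cases hk : k = (⟨p + (i : ℕ) - n, by omega⟩ : Fin p)
    · subst hk
      have hki : (⟨n + ((⟨p + (i : ℕ) - n, by omega⟩ : Fin p) : ℕ) - p,
          by simp; omega⟩ : Fin n) = i := Fin.ext (by simp; omega)
      rw [if_pos rfl, if_pos (by simp), if_neg (by simp), sub_zero, hki]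
    · have hk' : (k : ℕ) ≠ p + (i : ℕ) - n := fun h => hk (Fin.ext h)
      rw [if_neg hk]
      by_cases h1 : p + (i : ℕ) - n ≤ (k : ℕ)
      · rw [if_pos h1, if_pos (by omega), sub_self]
      · rw [if_neg h1, if_neg (by omega), sub_self]
  rw [Finset.sum_congr rfl (fun k _ => hstep k), Finset.sum_ite_eq' Finset.univ]
  simp
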